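/- arXiv:2001.06699 — 11 statements merged into one kernel-verified Lean document; each statement's English description precedes it below -/
import Mathlib

section
/- Let (Ω, ℱ, P) be a probability space with a filtration (ℱ_k)_{k∈ℕ}, let (Φ_k) be an adapted process with Φ_k ≥ 0 almost surely and E[Φ_0] < ∞, let T be a stopping time with respect to (ℱ_k), and let c > 0. If for every k ∈ ℕ one has 𝟙_{{k < T}}·E[Φ_{k+1} | ℱ_k] ≤ 𝟙_{{k < T}}·(Φ_k − c) almost surely, then T < ∞ almost surely and E[T] ≤ E[Φ_0]/c. -/
open MeasureTheory
open scoped ENNReal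

private lemma enat_coe_eq_tsum (n : ℕ∞) :
    (n : ℝ≥0∞) = ∑' k : ℕ, (if (k : ℕ∞) < n then (1 : ℝ≥0∞) else 0) := by
  cases n with
  | top =>
    simp only [ENat.toENNReal_top]
    have : ∀ k : ℕ, (if (k : ℕ∞) < ⊤ then (1 : ℝ≥0∞) else 0) = 1 := by
      intro k
      simp [lt_top_iff_ne_top]
    rw [tsum_congr this]
    exact (ENNReal.tsum_const_eq_top_of_ne_zero one_ne_zero).symm
  | coe m =>
    rw [tsum_eq_sum (s := Finset.range m) (by
      intro k hk
      simp only [Finset.mem_range, not_lt] at hk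
      simp [Nat.cast_lt, not_lt.2 hk])]
    have : ∀ k ∈ Finset.range m, (if ((k : ℕ) : ℕ∞) < (m : ℕ∞) then (1 : ℝ≥0∞) else 0) = 1 := by
      intro k hk
      simp only [Finset.mem_range] at hk
      simp [Nat.cast_lt, hk]
    rw [Finset.sum_congr rfl this]
    simp

/-- Expected-drift stopping-time bound: a nonnegative adapted process that decreases in
conditional expectation by a fixed amount `c > 0` before the stopping time `T` forces
`T < ∞` almost surely and `E[T] ≤ E[Φ 0] / c`. -/
theorem stmt_2 {Ω : Type*} {m : MeasurableSpace Ω} (P : Measure Ω) [IsProbabilityMeasure P]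
    (ℱ : Filtration ℕ m) (Φ : ℕ → Ω → ℝ) (c : ℝ) (hc : 0 < c)
    (hadapted : Adapted ℱ Φ)
    (hΦint : ∀ k, Integrable (Φ k) P)
    (hΦnonneg : ∀ k, ∀ᵐ ω ∂P, 0 ≤ Φ k ω)
    (T : Ω → ℕ∞)
    (hT : ∀ k : ℕ, MeasurableSet[ℱ k] {ω | T ω ≤ (k : ℕ∞)})
    (hdrift : ∀ k : ℕ, ∀ᵐ ω ∂P,
      (k : ℕ∞) < T ω → (P[Φ (k + 1)|ℱ k]) ω ≤ Φ k ω - c) :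
    (∀ᵐ ω ∂P, T ω < ⊤) ∧
      ∫⁻ ω, (T ω : ℝ≥0∞) ∂P ≤ ENNReal.ofReal ((∫ ω, Φ 0 ω ∂P) / c) := by
  classical
  set A : ℕ → Set Ω := fun k => {ω | (k : ℕ∞) < T ω} with hAdef
  have hAF : ∀ k, MeasurableSet[ℱ k] (A k) := by
    intro k
    have : A k = {ω | T ω ≤ (k : ℕ∞)}ᶜ := by
      ext ω; simp [hAdef, not_le]
    rw [this]
    exact (hT k).compl
  have hA : ∀ k, MeasurableSet (A k) := fun k => ℱ.le k _ (hAF k)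
  have hAmono : ∀ k, A (k + 1) ⊆ A k := by
    intro k ω hω
    simp only [hAdef, Set.mem_setOf_eq] at hω ⊢
    exact lt_of_le_of_lt (by exact_mod_cast Nat.le_succ k) hω
  set b : ℕ → ℝ := fun k => ∫ ω in A k, Φ k ω ∂P with hbdef
  have hbnonneg : ∀ k, 0 ≤ b k := by
    intro k
    exact setIntegral_nonneg_ae (hA k) ((hΦnonneg k).mono fun ω h _ => h)
  -- the key one-step estimate
  have hstep : ∀ k, b (k + 1) + c * (P (A k)).toReal ≤ b k := by
    intro k
    have h1 : b (k + 1) ≤ ∫ ω in A k, Φ (k + 1) ω ∂P := by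
      apply setIntegral_mono_set (hΦint (k + 1)).integrableOn
      · exact ae_restrict_of_ae (hΦnonneg (k + 1))
      · exact Filter.Eventually.of_forall (hAmono k)
    have h2 : ∫ ω in A k, Φ (k + 1) ω ∂P = ∫ ω in A k, (P[Φ (k + 1)|ℱ k]) ω ∂P :=
      (setIntegral_condExp (ℱ.le k) (hΦint (k + 1)) (hAF k)).symm
    have h3 : ∫ ω in A k, (P[Φ (k + 1)|ℱ k]) ω ∂P ≤ ∫ ω in A k, (Φ k ω - c) ∂P := by
      apply setIntegral_mono_ae_restrict integrable_condExp.integrableOn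
        ((hΦint k).sub (integrable_const c)).integrableOn
      refine (ae_restrict_iff' (hA k)).2 ?_
      filter_upwards [hdrift k] with ω h hω
      simpa using h hω
    have h4 : ∫ ω in A k, (Φ k ω - c) ∂P = b k - c * (P (A k)).toReal := by
      rw [integral_sub (hΦint k).integrableOn (integrable_const c)]
      simp [hbdef, mul_comm, Measure.real]
    linarith [h1.trans (h2 ▸ h3.trans_eq h4)]
  have hb0 : b 0 ≤ ∫ ω, Φ 0 ω ∂P := by
    exact setIntegral_le_integral (hΦint 0) ((hΦnonneg 0).mono fun ω h => h)
  have hsum : ∀ n, ∑ k ∈ Finset.range n, (P (A k)).toReal ≤ (∫ ω, Φ 0 ω ∂P) / c := by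
    intro n
    have key : ∀ n, c * ∑ k ∈ Finset.range n, (P (A k)).toReal + b n ≤ b 0 := by
      intro n
      induction n with
      | zero => simp
      | succ n ih =>
        rw [Finset.sum_range_succ]
        have := hstep n
        linarith
    have h := key n
    have hbn := hbnonneg n
    rw [le_div_iff₀ hc]
    linarith [hb0]
  -- pass to ENNReal
  have htsum : ∑' k : ℕ, P (A k) ≤ ENNReal.ofReal ((∫ ω, Φ 0 ω ∂P) / c) := by
    apply Summable.tsum_le_of_sum_range_le ENNReal.summable
    intro n
    calc ∑ k ∈ Finset.range n, P (A k)
        = ENNReal.ofReal (∑ k ∈ Finset.range n, (P (A k)).toReal) := by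
          rw [ENNReal.ofReal_sum_of_nonneg (fun k _ => ENNReal.toReal_nonneg)]
          exact Finset.sum_congr rfl fun k _ => (ENNReal.ofReal_toReal (measure_ne_top P _)).symm
      _ ≤ ENNReal.ofReal ((∫ ω, Φ 0 ω ∂P) / c) := ENNReal.ofReal_le_ofReal (hsum n)
  have hTcoe : ∀ ω, (T ω : ℝ≥0∞) = ∑' k : ℕ, Set.indicator (A k) (fun _ => (1 : ℝ≥0∞)) ω := by
    intro ω
    rw [enat_coe_eq_tsum (T ω)]
    refine tsum_congr fun k => ?_
    by_cases h : (k : ℕ∞) < T ω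
    · simp [h, Set.indicator_of_mem, hAdef, Set.mem_setOf_eq]
    · simp [h, Set.indicator_of_notMem, hAdef, Set.mem_setOf_eq]
  have hmeas : Measurable fun ω => ∑' k : ℕ, Set.indicator (A k) (fun _ => (1 : ℝ≥0∞)) ω :=
    Measurable.ennreal_tsum fun k => (measurable_const.indicator (hA k))
  have hlint : ∫⁻ ω, (T ω : ℝ≥0∞) ∂P = ∑' k : ℕ, P (A k) := by
    calc ∫⁻ ω, (T ω : ℝ≥0∞) ∂P
        = ∫⁻ ω, ∑' k : ℕ, Set.indicator (A k) (fun _ => (1 : ℝ≥0∞)) ω ∂P := by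
          exact lintegral_congr hTcoe
      _ = ∑' k : ℕ, ∫⁻ ω, Set.indicator (A k) (fun _ => (1 : ℝ≥0∞)) ω ∂P :=
          lintegral_tsum fun k => (measurable_const.indicator (hA k)).aemeasurable
      _ = ∑' k : ℕ, P (A k) := by
          refine tsum_congr fun k => ?_
          rw [lintegral_indicator (hA k)]
          simp
  constructor
  · have hfin : ∫⁻ ω, (T ω : ℝ≥0∞) ∂P < ⊤ :=
      (hlint ▸ htsum).trans_lt ENNReal.ofReal_lt_top
    have := ae_lt_top' (hmeas.aemeasurable) (by
      rw [lintegral_congr hTcoe] at hfin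
      exact hfin.ne)
    filter_upwards [this] with ω hω
    rw [← hTcoe ω, ← ENat.toENNReal_top] at hω
    exact ENat.toENNReal_lt.mp hω
  · rw [hlint]; exact htsum
end

section
/- Let E be a real inner product space, let g ∈ E with g ≠ 0, let H : E → E be a continuous linear self-adjoint operator with operator norm at most β for some β > 0, and let Δ > 0. Then there exists s ∈ E with ‖s‖ ≤ Δ, s a nonnegative multiple of −g, such that ⟨g, s⟩ + (1/2)⟨s, H s⟩ ≤ −(1/2)·‖g‖·min{Δ, ‖g‖/β}. -/
open scoped RealInnerProductSpace

/-- Cauchy decrease lemma for trust region methods: minimizing the quadratic model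
along the steepest descent direction within a ball of radius `Δ` achieves model
reduction at least `(1/2) ‖g‖ min {Δ, ‖g‖/β}`. -/
theorem stmt_3 {E : Type*} [NormedAddCommGroup E] [InnerProductSpace ℝ E]
    (g : E) (hg : g ≠ 0) (H : E →L[ℝ] E)
    (hsym : ∀ u v : E, ⟪H u, v⟫ = ⟪u, H v⟫)
    (β : ℝ) (hβ : 0 < β) (hHnorm : ‖H‖ ≤ β) (Δ : ℝ) (hΔ : 0 < Δ) :
    ∃ s : E, ‖s‖ ≤ Δ ∧ (∃ t : ℝ, 0 ≤ t ∧ s = t • (-g)) ∧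
      ⟪g, s⟫ + (1 / 2) * ⟪s, H s⟫ ≤ -(1 / 2) * ‖g‖ * min Δ (‖g‖ / β) := by
  have hng : 0 < ‖g‖ := norm_pos_iff.mpr hg
  set t : ℝ := min (Δ / ‖g‖) (1 / β) with ht
  have ht0 : 0 ≤ t := le_min (by positivity) (by positivity)
  refine ⟨t • (-g), ?_, ⟨t, ht0, rfl⟩, ?_⟩
  · have : ‖t • (-g)‖ = t * ‖g‖ := by
      rw [norm_smul, norm_neg, Real.norm_of_nonneg ht0]
    rw [this]
    calc t * ‖g‖ ≤ (Δ / ‖g‖) * ‖g‖ := by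
          exact mul_le_mul_of_nonneg_right (min_le_left _ _) hng.le
      _ = Δ := div_mul_cancel₀ _ hng.ne'
  · have htmin : t * ‖g‖ = min Δ (‖g‖ / β) := by
      rw [ht, min_mul_of_nonneg _ _ hng.le, div_mul_cancel₀ _ hng.ne',
        one_div, inv_mul_eq_div]
    have h1 : ⟪g, t • (-g)⟫ = -(t * (‖g‖ * ‖g‖)) := by
      rw [real_inner_smul_right, inner_neg_right, real_inner_self_eq_norm_mul_norm]
      ring
    have h2 : ⟪t • (-g), H (t • (-g))⟫ = t * t * ⟪g, H g⟫ := by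
      rw [map_smul, real_inner_smul_left, real_inner_smul_right, map_neg,
        inner_neg_neg]
      ring
    have hbound : ⟪g, H g⟫ ≤ β * (‖g‖ * ‖g‖) := by
      calc ⟪g, H g⟫ ≤ ‖g‖ * ‖H g‖ := real_inner_le_norm _ _
        _ ≤ ‖g‖ * (β * ‖g‖) := by
            apply mul_le_mul_of_nonneg_left _ (norm_nonneg g)
            calc ‖H g‖ ≤ ‖H‖ * ‖g‖ := H.le_opNorm g
              _ ≤ β * ‖g‖ := mul_le_mul_of_nonneg_right hHnorm (norm_nonneg g)
        _ = β * (‖g‖ * ‖g‖) := by ring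
    have htβ : t * β ≤ 1 := by
      calc t * β ≤ (1 / β) * β := mul_le_mul_of_nonneg_right (min_le_right _ _) hβ.le
        _ = 1 := one_div_mul_cancel hβ.ne'
    rw [h1, h2, ← htmin]
    have step : t * t * ⟪g, H g⟫ ≤ t * (‖g‖ * ‖g‖) := by
      calc t * t * ⟪g, H g⟫ ≤ t * t * (β * (‖g‖ * ‖g‖)) := by
            apply mul_le_mul_of_nonneg_left hbound (by positivity)
        _ = (t * β) * (t * (‖g‖ * ‖g‖)) := by ring
        _ ≤ 1 * (t * (‖g‖ * ‖g‖)) := by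
            apply mul_le_mul_of_nonneg_right htβ (by positivity)
        _ = t * (‖g‖ * ‖g‖) := one_mul _
    nlinarith [step]
end

section
/- Let γ > 1, η ∈ (0,1), c₂ > 0, f* ∈ ℝ, and ν ∈ (0,1) satisfy ν·η·c₂ ≥ (1 − ν)·(γ² − γ⁻²). Let E be a real inner product space, f : E → ℝ with f(y) ≥ f* for all y, and let x_k, x_{k+1} ∈ E and α_k, α_{k+1} > 0 be such that EITHER (successful case) f(x_k) − f(x_{k+1}) ≥ η·c₂·α_k² and α_{k+1} ≤ γ·α_k, OR (unsuccessful case) x_{k+1} = x_k and α_{k+1} = γ⁻¹·α_k. Define Φ_j = ν·(f(x_j) − f*) + (1 − ν)·α_j² for j ∈ {k, k+1}. Then Φ_k − Φ_{k+1} ≥ (1 − ν)·(1 − γ⁻²)·α_k². -/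
/-- Per-iteration progress bound for the classical trust region instance of the adaptive
deterministic framework, with progress measure `Φ_j = ν (f x_j - f*) + (1-ν) α_j²`. -/
theorem stmt_5 {E : Type*} [NormedAddCommGroup E] [InnerProductSpace ℝ E]
    (γ η c₂ fstar ν : ℝ) (hγ : 1 < γ) (hη : 0 < η) (hη1 : η < 1) (hc₂ : 0 < c₂)
    (hν : 0 < ν) (hν1 : ν < 1)
    (hνcond : ν * η * c₂ ≥ (1 - ν) * (γ ^ 2 - γ⁻¹ ^ 2))
    (f : E → ℝ) (hfstar : ∀ y, fstar ≤ f y)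
    (xk xk1 : E) (αk αk1 : ℝ) (hαk : 0 < αk) (hαk1 : 0 < αk1)
    (hcase : (f xk - f xk1 ≥ η * c₂ * αk ^ 2 ∧ αk1 ≤ γ * αk) ∨
      (xk1 = xk ∧ αk1 = γ⁻¹ * αk)) :
    (ν * (f xk - fstar) + (1 - ν) * αk ^ 2) -
      (ν * (f xk1 - fstar) + (1 - ν) * αk1 ^ 2) ≥
      (1 - ν) * (1 - γ⁻¹ ^ 2) * αk ^ 2 := by
  have hγ0 : (0:ℝ) < γ := by linarith
  have hinv : γ⁻¹ ^ 2 = (γ ^ 2)⁻¹ := by rw [inv_pow]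
  have hγ2 : (1:ℝ) < γ ^ 2 := by nlinarith
  have hinvlt : (γ ^ 2)⁻¹ < 1 := by
    rw [inv_lt_one_iff₀]; right; exact hγ2
  rcases hcase with ⟨h1, h2⟩ | ⟨h1, h2⟩
  · nlinarith [sq_nonneg αk, sq_nonneg αk1, mul_pos hαk hαk1, inv_pos.mpr (pow_pos hγ0 2),
      mul_le_mul h2 h2 hαk1.le (by positivity : (0:ℝ) ≤ γ * αk)]
  · subst h1; rw [h2]
    have : (γ⁻¹ * αk) ^ 2 = γ⁻¹ ^ 2 * αk ^ 2 := by ring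
    rw [this]; nlinarith
end

section
/- Let E be a real inner product space, f : E → ℝ differentiable with f(y) ≥ f* for all y and some f* ∈ ℝ. Let γ > 1, η ∈ (0,1), c₂ > 0, c₁ > 0, ε > 0, and ν ∈ (0,1) with ν·η·c₂ ≥ (1 − ν)·(γ² − γ⁻²). Let (x_k)_{k∈ℕ} in E and (α_k)_{k∈ℕ} positive reals be sequences such that for every k either (successful) f(x_k) − f(x_{k+1}) ≥ η·c₂·α_k² and α_{k+1} ≤ γ·α_k, or (unsuccessful) x_{k+1} = x_k and α_{k+1} = γ⁻¹·α_k. Define T_ε := min{k ∈ ℕ : ‖∇f(x_k)‖ ≤ ε} and suppose α_k ≥ c₁·ε for all k < T_ε. Then T_ε ≤ (ν·(f(x_0) − f*) + (1 − ν)·α_0²) / ((1 − ν)·(1 − γ⁻²)·c₁²·ε²). -/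
/-- `O(ε⁻²)` iteration complexity for the classical trust region instance of the adaptive
deterministic framework.  The stopping time `T_ε = min {k : ‖∇f(x_k)‖ ≤ ε}` is captured by
quantifying over all `T` such that `ε < ‖∇f(x_k)‖` for every `k < T`; the hypothesis
`α_k ≥ c₁ ε` for all `k < T_ε` is expressed via the equivalence
`k < T_ε ↔ ∀ j ≤ k, ε < ‖∇f(x_j)‖`. -/
theorem stmt_6 {E : Type*} [NormedAddCommGroup E] [InnerProductSpace ℝ E] [CompleteSpace E]
    (f : E → ℝ) (hf : Differentiable ℝ f) (fstar : ℝ) (hfstar : ∀ y, fstar ≤ f y)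
    (γ η c₂ c₁ ε ν : ℝ) (hγ : 1 < γ) (hη : 0 < η) (hη1 : η < 1)
    (hc₂ : 0 < c₂) (hc₁ : 0 < c₁) (hε : 0 < ε) (hν : 0 < ν) (hν1 : ν < 1)
    (hνcond : ν * η * c₂ ≥ (1 - ν) * (γ ^ 2 - γ⁻¹ ^ 2))
    (x : ℕ → E) (α : ℕ → ℝ) (hαpos : ∀ k, 0 < α k)
    (hcase : ∀ k : ℕ,
      (f (x k) - f (x (k + 1)) ≥ η * c₂ * (α k) ^ 2 ∧ α (k + 1) ≤ γ * α k) ∨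
      (x (k + 1) = x k ∧ α (k + 1) = γ⁻¹ * α k))
    (hαlow : ∀ k : ℕ, (∀ j ≤ k, ε < ‖gradient f (x j)‖) → c₁ * ε ≤ α k) :
    ∀ T : ℕ, (∀ k < T, ε < ‖gradient f (x k)‖) →
      (T : ℝ) ≤ (ν * (f (x 0) - fstar) + (1 - ν) * (α 0) ^ 2) /
        ((1 - ν) * (1 - γ⁻¹ ^ 2) * c₁ ^ 2 * ε ^ 2) := by
  intro T hT
  set Φ : ℕ → ℝ := fun k => ν * (f (x k) - fstar) + (1 - ν) * (α k) ^ 2 with hΦ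
  set C : ℝ := (1 - ν) * (1 - γ⁻¹ ^ 2) * c₁ ^ 2 * ε ^ 2 with hC
  have hγ0 : (0:ℝ) < γ := lt_trans one_pos hγ
  have hγinv : γ⁻¹ < 1 := inv_lt_one_of_one_lt₀ hγ
  have hγinv0 : 0 < γ⁻¹ := inv_pos.2 hγ0
  have hCpos : 0 < C := by
    apply mul_pos (mul_pos (mul_pos (by linarith) (by nlinarith)) (by positivity)) (by positivity)
  -- key decrease
  have key : ∀ k < T, Φ (k + 1) + C ≤ Φ k := by
    intro k hk
    have hαk : c₁ * ε ≤ α k := hαlow k (fun j hj => hT j (lt_of_le_of_lt hj hk))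
    have hαk2 : (c₁ * ε) ^ 2 ≤ (α k) ^ 2 := by
      apply pow_le_pow_left₀ (by positivity) hαk
    have hdec : (1 - ν) * (1 - γ⁻¹ ^ 2) * (α k) ^ 2 ≤ Φ k - Φ (k + 1) := by
      rcases hcase k with ⟨h1, h2⟩ | ⟨h1, h2⟩
      · have hα1 : 0 < α (k + 1) := hαpos (k + 1)
        have h3 : (α (k + 1)) ^ 2 ≤ γ ^ 2 * (α k) ^ 2 := by
          have := pow_le_pow_left₀ (le_of_lt hα1) h2 2
          calc (α (k+1))^2 ≤ (γ * α k)^2 := this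
            _ = γ^2 * (α k)^2 := by ring
        simp only [hΦ]
        nlinarith [sq_nonneg (α k), mul_pos (hαpos k) (hαpos k)]
      · simp only [hΦ, h1, h2]
        ring_nf
        nlinarith [sq_nonneg (α k)]
    have hCle : C ≤ (1 - ν) * (1 - γ⁻¹ ^ 2) * (α k) ^ 2 := by
      rw [hC]
      have : (0:ℝ) ≤ (1 - ν) * (1 - γ⁻¹ ^ 2) := by nlinarith
      calc (1 - ν) * (1 - γ⁻¹ ^ 2) * c₁ ^ 2 * ε ^ 2
          = (1 - ν) * (1 - γ⁻¹ ^ 2) * (c₁ * ε) ^ 2 := by ring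
        _ ≤ (1 - ν) * (1 - γ⁻¹ ^ 2) * (α k) ^ 2 := by
            exact mul_le_mul_of_nonneg_left hαk2 this
    simp only [hΦ] at hdec ⊢
    linarith
  have sum : ∀ n ≤ T, Φ n + n * C ≤ Φ 0 := by
    intro n hn
    induction n with
    | zero => simp
    | succ m ih =>
      have hm : m < T := hn
      have := key m hm
      have := ih (le_of_lt hm)
      push_cast
      linarith
  have hΦT : 0 ≤ Φ T := by
    have := hfstar (x T)
    have := sq_nonneg (α T)
    simp only [hΦ]
    nlinarith
  have hTC : (T : ℝ) * C ≤ Φ 0 := by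
    have := sum T le_rfl
    linarith
  rw [ge_iff_le, ← hC] at *
  rw [le_div_iff₀ hCpos]
  simpa [hΦ] using hTC
end

section
/- Let E be a real inner product space, f : E → ℝ differentiable with ∇f Lipschitz continuous with constant L > 0. Let M : E → E be a continuous linear self-adjoint operator with κ₁·‖v‖² ≤ ⟨v, M v⟩ and ‖M v‖ ≤ κ₂·‖v‖ for all v ∈ E, where 0 < κ₁ ≤ κ₂. Let x ∈ E with ∇f(x) ≠ 0, let η ∈ (0,1), α > 0, and set d = −M ∇f(x). If the Armijo condition fails at stepsize α, i.e., f(x + α·d) − f(x) > η·α·⟨∇f(x), d⟩, then α > 2·(1 − η)·κ₁/(L·κ₂²). -/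
open scoped RealInnerProductSpace

/-- Line search: failure of the Armijo condition at stepsize `α` along the direction
`d = -M ∇f(x)` (with `M` self-adjoint, `κ₁ ‖v‖² ≤ ⟪v, M v⟫`, `‖M v‖ ≤ κ₂ ‖v‖`) forces
`α > 2 (1-η) κ₁ / (L κ₂²)` when `∇f` is `L`-Lipschitz. -/
theorem stmt_7 {E : Type*} [NormedAddCommGroup E] [InnerProductSpace ℝ E] [CompleteSpace E]
    (f : E → ℝ) (hf : Differentiable ℝ f) (L : ℝ) (hL : 0 < L)
    (hLip : ∀ u v : E, ‖gradient f u - gradient f v‖ ≤ L * ‖u - v‖)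
    (M : E →L[ℝ] E) (hsym : ∀ u v : E, ⟪M u, v⟫ = ⟪u, M v⟫)
    (κ₁ κ₂ : ℝ) (hκ₁ : 0 < κ₁) (hκ₁₂ : κ₁ ≤ κ₂)
    (hlow : ∀ v : E, κ₁ * ‖v‖ ^ 2 ≤ ⟪v, M v⟫)
    (hup : ∀ v : E, ‖M v‖ ≤ κ₂ * ‖v‖)
    (x : E) (hgx : gradient f x ≠ 0)
    (η α : ℝ) (hη : 0 < η) (hη1 : η < 1) (hα : 0 < α)
    (d : E) (hd : d = -(M (gradient f x)))
    (hfail : f (x + α • d) - f x > η * α * ⟪gradient f x, d⟫) :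
    α > 2 * (1 - η) * κ₁ / (L * κ₂ ^ 2) := by
  set g := gradient f x with hg
  -- derivative of t ↦ f (x + t • d)
  have hfd : ∀ y : E, ∀ v : E, (fderiv ℝ f y) v = ⟪gradient f y, v⟫ := by
    intro y v
    have := ((hf y).hasGradientAt).hasFDerivAt
    rw [this.fderiv]
    simp [InnerProductSpace.toDual_apply_apply]
  have hcurve : ∀ t : ℝ, HasDerivAt (fun t : ℝ => f (x + t • d))
      (⟪gradient f (x + t • d), d⟫) t := by
    intro t
    have hc : HasDerivAt (fun t : ℝ => x + t • d) d t := by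
      simpa using ((hasDerivAt_id t).smul_const d).const_add x
    have := ((hf (x + t • d)).hasFDerivAt).comp_hasDerivAt t hc
    exact this.congr_deriv (hfd _ d)
  -- descent lemma via monotonicity
  set φ : ℝ → ℝ := fun t => L * t ^ 2 * ‖d‖ ^ 2 / 2 -
    (f (x + t • d) - f x - t * ⟪g, d⟫) with hφ
  have hφderiv : ∀ t : ℝ, HasDerivAt φ
      (L * t * ‖d‖ ^ 2 - (⟪gradient f (x + t • d), d⟫ - ⟪g, d⟫)) t := by
    intro t
    have h1 : HasDerivAt (fun t : ℝ => L * t ^ 2 * ‖d‖ ^ 2 / 2) (L * t * ‖d‖ ^ 2) t := by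
      have := (hasDerivAt_pow 2 t).const_mul L
      have := (this.mul_const (‖d‖ ^ 2)).div_const 2
      refine this.congr_deriv ?_
      simp only [show (2:ℕ) - 1 = 1 from rfl, pow_one, Nat.cast_ofNat]
      ring
    have h2 : HasDerivAt (fun t : ℝ => f (x + t • d) - f x - t * ⟪g, d⟫)
        (⟪gradient f (x + t • d), d⟫ - ⟪g, d⟫) t := by
      exact ((hcurve t).sub_const (f x)).sub (hasDerivAt_mul_const (⟪g, d⟫))
    exact h1.sub h2
  have hderiv_nonneg : ∀ t ∈ Set.Ioo (0:ℝ) α,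
      0 ≤ L * t * ‖d‖ ^ 2 - (⟪gradient f (x + t • d), d⟫ - ⟪g, d⟫) := by
    intro t ht
    have ht0 : 0 ≤ t := ht.1.le
    have hinner : ⟪gradient f (x + t • d), d⟫ - ⟪g, d⟫
        = ⟪gradient f (x + t • d) - g, d⟫ := by
      rw [inner_sub_left]
    rw [hinner, sub_nonneg]
    calc ⟪gradient f (x + t • d) - g, d⟫ ≤ ‖gradient f (x + t • d) - g‖ * ‖d‖ :=
          real_inner_le_norm _ _
      _ ≤ (L * ‖(x + t • d) - x‖) * ‖d‖ := by
          apply mul_le_mul_of_nonneg_right (hLip _ _) (norm_nonneg _)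
      _ = L * t * ‖d‖ ^ 2 := by
          simp [norm_smul, abs_of_nonneg ht0]; ring
  have hmono : MonotoneOn φ (Set.Icc 0 α) := by
    apply monotoneOn_of_deriv_nonneg (convex_Icc 0 α)
    · exact Continuous.continuousOn (by
        have : Continuous φ := by
          apply Continuous.sub
          · fun_prop
          · exact ((hf.continuous.comp (by fun_prop)).sub continuous_const).sub (by fun_prop)
        exact this)
    · intro t ht
      exact (hφderiv t).differentiableAt.differentiableWithinAt
    · intro t ht
      rw [interior_Icc] at ht
      rw [(hφderiv t).deriv]
      exact hderiv_nonneg t ht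
  have hφ0 : φ 0 = 0 := by simp [hφ]
  have hφα : 0 ≤ φ α := by
    rw [← hφ0]
    exact hmono (Set.left_mem_Icc.2 hα.le) (Set.mem_Icc.2 ⟨hα.le, le_refl α⟩) hα.le
  have hdescent : f (x + α • d) - f x ≤ α * ⟪g, d⟫ + L * α ^ 2 * ‖d‖ ^ 2 / 2 := by
    have := hφα
    simp only [hφ] at this
    linarith
  -- combine
  have hgd : ⟪g, d⟫ = -⟪g, M g⟫ := by rw [hd]; simp
  have hgd_le : ⟪g, d⟫ ≤ -(κ₁ * ‖g‖ ^ 2) := by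
    rw [hgd]; exact neg_le_neg (hlow g)
  have hgnorm : 0 < ‖g‖ ^ 2 := pow_pos (norm_pos_iff.2 hgx) 2
  have hdnorm : ‖d‖ ^ 2 ≤ κ₂ ^ 2 * ‖g‖ ^ 2 := by
    have h1 : ‖d‖ ≤ κ₂ * ‖g‖ := by rw [hd]; simpa using hup g
    have h2 : 0 ≤ ‖d‖ := norm_nonneg _
    nlinarith [norm_nonneg g, hκ₁.trans_le hκ₁₂]
  have hηα : (0:ℝ) ≤ (1 - η) * α := mul_nonneg (by linarith) hα.le
  have key : (1 - η) * α * (κ₁ * ‖g‖ ^ 2) < L * α ^ 2 * (κ₂ ^ 2 * ‖g‖ ^ 2) / 2 := by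
    nlinarith [hfail, hdescent, mul_le_mul_of_nonneg_left hgd_le hηα,
      mul_le_mul_of_nonneg_left hdnorm (by positivity : (0:ℝ) ≤ L * α ^ 2 / 2)]
  have hLκ : 0 < L * κ₂ ^ 2 := mul_pos hL (pow_pos (hκ₁.trans_le hκ₁₂) 2)
  rw [gt_iff_lt, div_lt_iff₀ hLκ]
  have hpos : 0 < α * ‖g‖ ^ 2 := mul_pos hα hgnorm
  have key2 : (1 - η) * κ₁ < L * α * κ₂ ^ 2 / 2 := by
    apply lt_of_mul_lt_mul_right _ hpos.le
    calc (1 - η) * κ₁ * (α * ‖g‖ ^ 2) = (1 - η) * α * (κ₁ * ‖g‖ ^ 2) := by ring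
      _ < L * α ^ 2 * (κ₂ ^ 2 * ‖g‖ ^ 2) / 2 := key
      _ = L * α * κ₂ ^ 2 / 2 * (α * ‖g‖ ^ 2) := by ring
  nlinarith [key2]
end

section
/- Let E be a real inner product space, f : E → ℝ differentiable with ∇f Lipschitz continuous with constant L > 0 and f(y) ≥ f* for all y and some f* ∈ ℝ. Let γ > 1, η ∈ (0,1), c₃ > 0, β > 0, ᾱ > 0, and ν ∈ (0,1) satisfy ν·η·c₃ ≥ (1 − ν)·((L·ᾱ·β + 1)²·γ − γ⁻¹). Let x_k, x_{k+1} ∈ E and α_k, α_{k+1} ∈ (0, ᾱ] be such that EITHER (successful case) x_{k+1} = x_k + α_k·d_k for some d_k ∈ E with ‖d_k‖ ≤ β·‖∇f(x_k)‖, f(x_k) − f(x_{k+1}) ≥ η·c₃·α_k·‖∇f(x_k)‖², and α_{k+1} ≤ γ·α_k, OR (unsuccessful case) x_{k+1} = x_k and α_{k+1} = γ⁻¹·α_k. Define Φ_j = ν·(f(x_j) − f*) + (1 − ν)·α_j·‖∇f(x_j)‖² for j ∈ {k, k+1}. Then Φ_k − Φ_{k+1} ≥ (1 − ν)·(1 −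 γ⁻¹)·α_k·‖∇f(x_k)‖². -/
/-- Per-iteration progress bound for the classical line search instance of the adaptive
deterministic framework, with progress measure
`Φ_j = ν (f x_j - f*) + (1-ν) α_j ‖∇f(x_j)‖²`. -/
theorem stmt_9 {E : Type*} [NormedAddCommGroup E] [InnerProductSpace ℝ E] [CompleteSpace E]
    (f : E → ℝ) (hf : Differentiable ℝ f) (L fstar : ℝ) (hL : 0 < L)
    (hLip : ∀ u v : E, ‖gradient f u - gradient f v‖ ≤ L * ‖u - v‖)
    (hfstar : ∀ y, fstar ≤ f y)
    (γ η c₃ β αbar ν : ℝ) (hγ : 1 < γ) (hη : 0 < η) (hη1 : η < 1)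
    (hc₃ : 0 < c₃) (hβ : 0 < β) (hαbar : 0 < αbar) (hν : 0 < ν) (hν1 : ν < 1)
    (hνcond : ν * η * c₃ ≥ (1 - ν) * ((L * αbar * β + 1) ^ 2 * γ - γ⁻¹))
    (xk xk1 : E) (αk αk1 : ℝ)
    (hαk : 0 < αk) (hαkbar : αk ≤ αbar) (hαk1 : 0 < αk1) (hαk1bar : αk1 ≤ αbar)
    (hcase : (∃ d : E, xk1 = xk + αk • d ∧ ‖d‖ ≤ β * ‖gradient f xk‖ ∧
        f xk - f xk1 ≥ η * c₃ * αk * ‖gradient f xk‖ ^ 2 ∧ αk1 ≤ γ * αk) ∨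
      (xk1 = xk ∧ αk1 = γ⁻¹ * αk)) :
    (ν * (f xk - fstar) + (1 - ν) * αk * ‖gradient f xk‖ ^ 2) -
      (ν * (f xk1 - fstar) + (1 - ν) * αk1 * ‖gradient f xk1‖ ^ 2) ≥
      (1 - ν) * (1 - γ⁻¹) * αk * ‖gradient f xk‖ ^ 2 := by
  set g := gradient f xk with hg
  rcases hcase with ⟨d, hx, hd, hdec, hα1⟩ | ⟨hx, hα1⟩
  · set g1 := gradient f xk1 with hg1def
    have hγ0 : 0 < γ := lt_trans one_pos hγ
    have hgnn : 0 ≤ ‖g‖ := norm_nonneg _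
    have hg1nn : 0 ≤ ‖g1‖ := norm_nonneg _
    have hgb : ‖g1‖ ≤ (L * αk * β + 1) * ‖g‖ := by
      have h1 : ‖g1 - g‖ ≤ L * ‖xk1 - xk‖ := hLip xk1 xk
      have h2 : ‖xk1 - xk‖ = αk * ‖d‖ := by
        rw [hx]; simp [norm_smul, abs_of_pos hαk]
      have h3 : ‖g1 - g‖ ≤ L * (αk * (β * ‖g‖)) := by
        calc ‖g1 - g‖ ≤ L * ‖xk1 - xk‖ := h1
          _ = L * (αk * ‖d‖) := by rw [h2]
          _ ≤ L * (αk * (β * ‖g‖)) := by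
              apply mul_le_mul_of_nonneg_left _ hL.le
              exact mul_le_mul_of_nonneg_left hd hαk.le
      have h4 : ‖g1‖ - ‖g‖ ≤ ‖g1 - g‖ := norm_sub_norm_le g1 g
      linarith
    have hfac : (0:ℝ) ≤ L * αk * β + 1 := by positivity
    have hsq : ‖g1‖ ^ 2 ≤ (L * αk * β + 1) ^ 2 * ‖g‖ ^ 2 := by nlinarith
    have h5 : αk1 * ‖g1‖ ^ 2 ≤ γ * αk * ((L * αk * β + 1) ^ 2 * ‖g‖ ^ 2) :=
      mul_le_mul hα1 hsq (sq_nonneg _) (by positivity)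
    have h7 : αk1 * ‖g1‖ ^ 2 ≤ γ * αk * ((L * αbar * β + 1) ^ 2 * ‖g‖ ^ 2) := by
      refine h5.trans ?_
      gcongr

    have hν' : (0:ℝ) ≤ 1 - ν := by linarith
    have h7' := mul_le_mul_of_nonneg_left h7 hν'
    have hdec' := mul_le_mul_of_nonneg_left hdec hν.le
    have hkey : 0 ≤ (ν * η * c₃ - (1 - ν) * ((L * αbar * β + 1) ^ 2 * γ - γ⁻¹)) *
        (αk * ‖g‖ ^ 2) :=
      mul_nonneg (sub_nonneg.mpr hνcond) (by positivity)
    nlinarith [h7', hdec', hkey]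
  · subst hx; rw [hα1]; ring_nf; exact le_of_eq (by ring)
end

section
/- Let E be a real inner product space, f : E → ℝ differentiable with ∇f Lipschitz continuous with constant L > 0 and f(y) ≥ f* for all y and some f* ∈ ℝ. Let γ > 1, η ∈ (0,1), c₃ > 0, β > 0, ᾱ > 0, α̲ > 0, ε > 0, and ν ∈ (0,1) with ν·η·c₃ ≥ (1 − ν)·((L·ᾱ·β + 1)²·γ − γ⁻¹). Let (x_k)_{k∈ℕ} in E and (α_k)_{k∈ℕ} in (0, ᾱ] be sequences such that α_k ≥ α̲ for all k, and for every k either (successful) x_{k+1} = x_k + α_k·d_k with ‖d_k‖ ≤ β·‖∇f(x_k)‖, f(x_k) − f(x_{k+1}) ≥ η·c₃·α_k·‖∇f(x_k)‖², and α_{k+1} ≤ γ·α_k, or (unsuccessful) x_{k+1} = x_k and α_{k+1} = γ⁻¹·α_k. Define T_ε := min{k ∈ ℕ : ‖∇f(x_k)‖ ≤ ε}. Then T_ε ≤ (ν·(f(x_0) − f*) + (1 − ν)·α_0·‖∇f(x_0)‖²) / ((1 − ν)·(1 − γ⁻¹)·α̲·ε²). -/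
set_option maxHeartbeats 1000000


/-- `O(ε⁻²)` iteration complexity for the classical line search instance of the adaptive
deterministic framework.  The stopping time `T_ε = min {k : ‖∇f(x_k)‖ ≤ ε}` is captured by
quantifying over all `T` such that `ε < ‖∇f(x_k)‖` for every `k < T`. -/
theorem stmt_10 {E : Type*} [NormedAddCommGroup E] [InnerProductSpace ℝ E] [CompleteSpace E]
    (f : E → ℝ) (hf : Differentiable ℝ f) (L fstar : ℝ) (hL : 0 < L)
    (hLip : ∀ u v : E, ‖gradient f u - gradient f v‖ ≤ L * ‖u - v‖)
    (hfstar : ∀ y, fstar ≤ f y)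
    (γ η c₃ β αbar αlow ε ν : ℝ) (hγ : 1 < γ) (hη : 0 < η) (hη1 : η < 1)
    (hc₃ : 0 < c₃) (hβ : 0 < β) (hαbar : 0 < αbar) (hαlow : 0 < αlow) (hε : 0 < ε)
    (hν : 0 < ν) (hν1 : ν < 1)
    (hνcond : ν * η * c₃ ≥ (1 - ν) * ((L * αbar * β + 1) ^ 2 * γ - γ⁻¹))
    (x : ℕ → E) (α : ℕ → ℝ)
    (hαpos : ∀ k, 0 < α k) (hαle : ∀ k, α k ≤ αbar) (hαge : ∀ k, αlow ≤ α k)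
    (hcase : ∀ k : ℕ,
      (∃ d : E, x (k + 1) = x k + α k • d ∧ ‖d‖ ≤ β * ‖gradient f (x k)‖ ∧
        f (x k) - f (x (k + 1)) ≥ η * c₃ * α k * ‖gradient f (x k)‖ ^ 2 ∧
        α (k + 1) ≤ γ * α k) ∨
      (x (k + 1) = x k ∧ α (k + 1) = γ⁻¹ * α k)) :
    ∀ T : ℕ, (∀ k < T, ε < ‖gradient f (x k)‖) →
      (T : ℝ) ≤ (ν * (f (x 0) - fstar) + (1 - ν) * α 0 * ‖gradient f (x 0)‖ ^ 2) /
        ((1 - ν) * (1 - γ⁻¹) * αlow * ε ^ 2) := by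
  intro T hT
  have hγ0 : (0:ℝ) < γ := lt_trans one_pos hγ
  have hγinv0 : (0:ℝ) < γ⁻¹ := inv_pos.mpr hγ0
  have hγinv1 : γ⁻¹ < 1 := by
    rw [inv_lt_one_iff₀]; right; exact hγ
  set Φ : ℕ → ℝ := fun k => ν * (f (x k) - fstar) + (1 - ν) * α k * ‖gradient f (x k)‖ ^ 2
    with hΦdef
  set c : ℝ := (1 - ν) * (1 - γ⁻¹) * αlow * ε ^ 2 with hcdef
  have hcpos : 0 < c := by
    have h1 : (0:ℝ) < 1 - ν := by linarith
    have h2 : (0:ℝ) < 1 - γ⁻¹ := by linarith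
    positivity
  have hΦnn : ∀ k, 0 ≤ Φ k := by
    intro k
    have h1 : (0:ℝ) ≤ f (x k) - fstar := by linarith [hfstar (x k)]
    have h2 : (0:ℝ) < 1 - ν := by linarith
    have h3 := (hαpos k).le
    simp only [hΦdef]
    positivity
  -- per-step decrease
  have key : ∀ k < T, Φ (k + 1) + c ≤ Φ k := by
    intro k hk
    have hgε : ε < ‖gradient f (x k)‖ := hT k hk
    have hαk := hαpos k
    have hαk1 := hαpos (k+1)
    have hαkl := hαge k
    have hαkb := hαle k
    have h1ν : (0:ℝ) < 1 - ν := by linarith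
    set g : ℝ := ‖gradient f (x k)‖ with hg
    have hgnn : 0 ≤ g := norm_nonneg _
    have hg2 : ε ^ 2 ≤ g ^ 2 := by nlinarith [hε.le]
    have hαge2 : αlow * ε ^ 2 ≤ α k * g ^ 2 := by nlinarith
    have hd4 : (1 - ν) * (1 - γ⁻¹) * (αlow * ε ^ 2) ≤ (1 - ν) * (1 - γ⁻¹) * (α k * g ^ 2) := by
      apply mul_le_mul_of_nonneg_left hαge2
      have : (0:ℝ) < 1 - γ⁻¹ := by linarith
      positivity
    rcases hcase k with ⟨d, hxd, hd, hdec, hαup⟩ | ⟨hxe, hαe⟩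
    · -- successful step
      have hdnn : (0:ℝ) ≤ ‖d‖ := norm_nonneg _
      have h2 : ‖x (k+1) - x k‖ = α k * ‖d‖ := by
        rw [hxd]; simp [norm_smul, abs_of_pos hαk]
      have h3 : ‖gradient f (x (k+1))‖ ≤ g + L * (α k * ‖d‖) := by
        have h1 := hLip (x (k+1)) (x k)
        have h0 := norm_le_norm_add_norm_sub' (gradient f (x (k+1))) (gradient f (x k))
        rw [h2] at h1
        rw [hg]
        linarith
      have hg' : ‖gradient f (x (k+1))‖ ≤ (L * αbar * β + 1) * g := by
        have t1 : L * (α k * ‖d‖) ≤ L * (αbar * (β * g)) := by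
          have : α k * ‖d‖ ≤ αbar * (β * g) := by
            apply mul_le_mul hαkb hd hdnn hαbar.le
          exact mul_le_mul_of_nonneg_left this hL.le
        linarith [h3]
      have hsq : α (k+1) * ‖gradient f (x (k+1))‖ ^ 2
          ≤ γ * α k * ((L * αbar * β + 1) ^ 2 * g ^ 2) := by
        have h0 : 0 ≤ ‖gradient f (x (k+1))‖ := norm_nonneg _
        have h1 : ‖gradient f (x (k+1))‖ ^ 2 ≤ ((L * αbar * β + 1) * g) ^ 2 :=
          pow_le_pow_left₀ h0 hg' 2
        calc α (k+1) * ‖gradient f (x (k+1))‖ ^ 2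
            ≤ (γ * α k) * (((L * αbar * β + 1) * g) ^ 2) :=
              mul_le_mul hαup h1 (by positivity) (by positivity)
          _ = γ * α k * ((L * αbar * β + 1) ^ 2 * g ^ 2) := by ring
      have hb : (1 - ν) * (α (k+1) * ‖gradient f (x (k+1))‖ ^ 2)
          ≤ (1 - ν) * (γ * α k * ((L * αbar * β + 1) ^ 2 * g ^ 2)) :=
        mul_le_mul_of_nonneg_left hsq h1ν.le
      have ha : ν * (f (x k) - f (x (k+1))) ≥ ν * (η * c₃ * α k * g ^ 2) :=
        mul_le_mul_of_nonneg_left hdec hν.le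
      have hcoef : (1 - ν) * (1 - γ⁻¹)
          ≤ ν * η * c₃ + (1 - ν) - (1 - ν) * ((L * αbar * β + 1) ^ 2 * γ) := by
        linarith [hνcond]
      have hc3 : (1 - ν) * (1 - γ⁻¹) * (α k * g ^ 2)
          ≤ (ν * η * c₃ + (1 - ν) - (1 - ν) * ((L * αbar * β + 1) ^ 2 * γ)) * (α k * g ^ 2) := by
        apply mul_le_mul_of_nonneg_right hcoef
        positivity
      simp only [hΦdef, hcdef, ← hg]
      linarith [ha, hb, hc3, hd4]
    · -- unsuccessful step
      simp only [hΦdef, hcdef, hxe, hαe, ← hg]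
      linarith [hd4]
  -- telescope
  have hsum : ∀ k ≤ T, (k : ℝ) * c ≤ Φ 0 - Φ k := by
    intro k hkT
    induction k with
    | zero => simp
    | succ n ih =>
      have hn : n < T := Nat.lt_of_succ_le hkT
      have h1 := ih (le_of_lt hn)
      have h2 := key n hn
      push_cast
      linarith
  have hTc : (T : ℝ) * c ≤ Φ 0 := by
    have := hsum T le_rfl
    linarith [hΦnn T]
  rw [le_div_iff₀ hcpos]
  simp only [hΦdef] at hTc
  linarith [hTc]
end

section
/- Let γ > 1, η ∈ (0,1), c₄ > 0, f* ∈ ℝ, and ν ∈ (0,1) satisfy ν·η·c₄ ≥ (1 − ν)·(γ + 1 − γ⁻¹). Let E be a real inner product space, f : E → ℝ differentiable with f(y) ≥ f* for all y, and let x_k, x_{k+1} ∈ E and α_k, α_{k+1} > 0 be such that EITHER (successful case) f(x_k) − f(x_{k+1}) ≥ η·c₄·α_k·‖∇f(x_{k+1})‖^{3/2} and α_{k+1} ≤ γ·α_k, OR (unsuccessful case) x_{k+1} = x_k and α_{k+1} = γ⁻¹·α_k. Define Φ_j = ν·(f(x_j) − f*) + (1 − ν)·α_j·‖∇f(x_j)‖^{3/2}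 for j ∈ {k, k+1}. Then Φ_k − Φ_{k+1} ≥ (1 − ν)·(1 − γ⁻¹)·α_k·‖∇f(x_{k+1})‖^{3/2}. -/
/-- Per-iteration progress bound for the cubicly regularized Newton instance of the
adaptive deterministic framework, with progress measure
`Φ_j = ν (f x_j - f*) + (1-ν) α_j ‖∇f(x_j)‖^(3/2)`. -/
theorem stmt_11 {E : Type*} [NormedAddCommGroup E] [InnerProductSpace ℝ E] [CompleteSpace E]
    (γ η c₄ fstar ν : ℝ) (hγ : 1 < γ) (hη : 0 < η) (hη1 : η < 1) (hc₄ : 0 < c₄)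
    (hν : 0 < ν) (hν1 : ν < 1)
    (hνcond : ν * η * c₄ ≥ (1 - ν) * (γ + 1 - γ⁻¹))
    (f : E → ℝ) (hf : Differentiable ℝ f) (hfstar : ∀ y, fstar ≤ f y)
    (xk xk1 : E) (αk αk1 : ℝ) (hαk : 0 < αk) (hαk1 : 0 < αk1)
    (hcase : (f xk - f xk1 ≥ η * c₄ * αk * ‖gradient f xk1‖ ^ ((3 : ℝ) / 2) ∧
        αk1 ≤ γ * αk) ∨
      (xk1 = xk ∧ αk1 = γ⁻¹ * αk)) :
    (ν * (f xk - fstar) + (1 - ν) * αk * ‖gradient f xk‖ ^ ((3 : ℝ) / 2)) -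
      (ν * (f xk1 - fstar) + (1 - ν) * αk1 * ‖gradient f xk1‖ ^ ((3 : ℝ) / 2)) ≥
      (1 - ν) * (1 - γ⁻¹) * αk * ‖gradient f xk1‖ ^ ((3 : ℝ) / 2) := by
  set G := ‖gradient f xk1‖ ^ ((3 : ℝ) / 2) with hG
  set Gk := ‖gradient f xk‖ ^ ((3 : ℝ) / 2) with hGk
  have hGpos : 0 ≤ G := Real.rpow_nonneg (norm_nonneg _) _
  have hGkpos : 0 ≤ Gk := Real.rpow_nonneg (norm_nonneg _) _
  have h1ν : 0 < 1 - ν := by linarith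
  rcases hcase with ⟨hdec, hup⟩ | ⟨hx, hα⟩
  · nlinarith [mul_nonneg hGkpos h1ν.le, mul_nonneg (mul_nonneg h1ν.le hαk.le) hGpos,
      mul_le_mul_of_nonneg_right hup hGpos, mul_le_mul_of_nonneg_right hνcond hGpos,
      mul_le_mul_of_nonneg_left hdec hν.le]
  · subst hx hα
    have : Gk = G := rfl
    nlinarith [mul_nonneg (mul_nonneg h1ν.le hαk.le) hGpos]
end

section
/- Let E be a real inner product space, f : E → ℝ differentiable with f(y) ≥ f* for all y and some f* ∈ ℝ. Let γ > 1, η ∈ (0,1), c₄ > 0, α̲ > 0, ε > 0, and ν ∈ (0,1) with ν·η·c₄ ≥ (1 − ν)·(γ + 1 − γ⁻¹). Let (x_k)_{k∈ℕ} in E and (α_k)_{k∈ℕ} positive reals be sequences such that α_k ≥ α̲ for all k, and for every k either (successful) f(x_k) − f(x_{k+1}) ≥ η·c₄·α_k·‖∇f(x_{k+1})‖^{3/2} and α_{k+1} ≤ γ·α_k, or (unsuccessful) x_{k+1} = x_k and α_{k+1} = γ⁻¹·α_k. Define T_ε := min{k ∈ ℕ : ‖∇f(x_{k+1})‖ ≤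 ε}. Then T_ε ≤ (ν·(f(x_0) − f*) + (1 − ν)·α_0·‖∇f(x_0)‖^{3/2}) / ((1 − ν)·(1 − γ⁻¹)·α̲·ε^{3/2}). -/
/-- `O(ε^(-3/2))` iteration complexity for the cubicly regularized Newton instance of the
adaptive deterministic framework.  The stopping time `T_ε = min {k : ‖∇f(x_{k+1})‖ ≤ ε}`
is captured by quantifying over all `T` such that `ε < ‖∇f(x_{k+1})‖` for all `k < T`. -/
theorem stmt_12 {E : Type*} [NormedAddCommGroup E] [InnerProductSpace ℝ E] [CompleteSpace E]
    (f : E → ℝ) (hf : Differentiable ℝ f) (fstar : ℝ) (hfstar : ∀ y, fstar ≤ f y)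
    (γ η c₄ αlow ε ν : ℝ) (hγ : 1 < γ) (hη : 0 < η) (hη1 : η < 1)
    (hc₄ : 0 < c₄) (hαlow : 0 < αlow) (hε : 0 < ε) (hν : 0 < ν) (hν1 : ν < 1)
    (hνcond : ν * η * c₄ ≥ (1 - ν) * (γ + 1 - γ⁻¹))
    (x : ℕ → E) (α : ℕ → ℝ) (hαpos : ∀ k, 0 < α k) (hαge : ∀ k, αlow ≤ α k)
    (hcase : ∀ k : ℕ,
      (f (x k) - f (x (k + 1)) ≥
          η * c₄ * α k * ‖gradient f (x (k + 1))‖ ^ ((3 : ℝ) / 2) ∧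
        α (k + 1) ≤ γ * α k) ∨
      (x (k + 1) = x k ∧ α (k + 1) = γ⁻¹ * α k)) :
    ∀ T : ℕ, (∀ k < T, ε < ‖gradient f (x (k + 1))‖) →
      (T : ℝ) ≤ (ν * (f (x 0) - fstar) + (1 - ν) * α 0 * ‖gradient f (x 0)‖ ^ ((3 : ℝ) / 2)) /
        ((1 - ν) * (1 - γ⁻¹) * αlow * ε ^ ((3 : ℝ) / 2)) := by
  intro T hT
  set g : ℕ → ℝ := fun k => ‖gradient f (x k)‖ ^ ((3 : ℝ) / 2) with hgdef
  have hgnn : ∀ k, 0 ≤ g k := fun k => Real.rpow_nonneg (norm_nonneg _) _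
  have hγ0 : (0 : ℝ) < γ := lt_trans one_pos hγ
  have hγinv : γ⁻¹ < 1 := by
    rw [inv_lt_one_iff₀]; right; exact hγ
  have hν' : (0 : ℝ) < 1 - ν := by linarith
  have hεr : (0 : ℝ) < ε ^ ((3 : ℝ) / 2) := Real.rpow_pos_of_pos hε _
  set δ : ℝ := (1 - ν) * (1 - γ⁻¹) * αlow * ε ^ ((3 : ℝ) / 2) with hδdef
  have hδpos : 0 < δ := by
    apply mul_pos (mul_pos (mul_pos hν' (by linarith)) hαlow) hεr
  set Φ : ℕ → ℝ := fun k => ν * (f (x k) - fstar) + (1 - ν) * α k * g k with hΦdef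
  have hΦnn : ∀ k, 0 ≤ Φ k := by
    intro k
    have h1 : 0 ≤ ν * (f (x k) - fstar) :=
      mul_nonneg hν.le (by linarith [hfstar (x k)])
    have h2 : 0 ≤ (1 - ν) * α k * g k :=
      mul_nonneg (mul_nonneg hν'.le (hαpos k).le) (hgnn k)
    simp only [hΦdef]
    linarith
  have key : ∀ k < T, δ ≤ Φ k - Φ (k + 1) := by
    intro k hk
    have hεg : ε ^ ((3 : ℝ) / 2) ≤ g (k + 1) :=
      Real.rpow_le_rpow hε.le (hT k hk).le (by norm_num)
    have h5 : αlow * ε ^ ((3 : ℝ) / 2) ≤ α k * g (k + 1) :=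
      mul_le_mul (hαge k) hεg hεr.le (hαpos k).le
    rcases hcase k with ⟨hdec, halp⟩ | ⟨hx, halp⟩
    · have h1 : ν * (η * c₄ * α k * g (k + 1)) ≤ ν * (f (x k) - f (x (k + 1))) :=
        mul_le_mul_of_nonneg_left hdec hν.le
      have h2 : (1 - ν) * (α (k + 1) * g (k + 1)) ≤ (1 - ν) * (γ * α k * g (k + 1)) :=
        mul_le_mul_of_nonneg_left (mul_le_mul_of_nonneg_right halp (hgnn _)) hν'.le
      have h4 : (1 - ν) * (γ + 1 - γ⁻¹) * (α k * g (k + 1)) ≤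
          ν * η * c₄ * (α k * g (k + 1)) :=
        mul_le_mul_of_nonneg_right hνcond (mul_nonneg (hαpos k).le (hgnn _))
      have h3 : 0 ≤ (1 - ν) * α k * g k :=
        mul_nonneg (mul_nonneg hν'.le (hαpos k).le) (hgnn k)
      have h5' : (1 - ν) * (1 - γ⁻¹) * (αlow * ε ^ ((3 : ℝ) / 2)) ≤
          (1 - ν) * (1 - γ⁻¹) * (α k * g (k + 1)) :=
        mul_le_mul_of_nonneg_left h5 (mul_nonneg hν'.le (by linarith))
      simp only [hΦdef, hδdef]
      nlinarith [h1, h2, h4, h3, h5']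
    · have hgeq : g (k + 1) = g k := by simp only [hgdef, hx]
      have h5' : (1 - ν) * (1 - γ⁻¹) * (αlow * ε ^ ((3 : ℝ) / 2)) ≤
          (1 - ν) * (1 - γ⁻¹) * (α k * g (k + 1)) :=
        mul_le_mul_of_nonneg_left h5 (mul_nonneg hν'.le (by linarith))
      simp only [hΦdef, hδdef, hx, halp, hgeq]
      nlinarith [h5', hgeq]
  have sum : ∀ k ≤ T, (k : ℝ) * δ ≤ Φ 0 - Φ k := by
    intro k hk
    induction k with
    | zero => simp
    | succ n ih =>
      have hn : n < T := lt_of_lt_of_le (Nat.lt_succ_self n) hk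
      have := key n hn
      have ih' := ih hn.le
      push_cast
      linarith
  have hfin : (T : ℝ) * δ ≤ Φ 0 := by
    have := sum T le_rfl
    linarith [hΦnn T]
  rw [ge_iff_le, ← hδdef] at *
  rw [le_div_iff₀ hδpos]
  exact hfin
end

section
/- Let E be a real inner product space, f : E → ℝ a convex differentiable function with a global minimizer x* ∈ E, and set f* = f(x*). Let x, x' ∈ E, D > 0, c > 0, and α > 0 be such that ‖x − x*‖ ≤ D, f(x') > f*, f(x') < f(x), and f(x) − f(x') ≥ c·α·‖∇f(x)‖². Then 1/(f(x') − f*) − 1/(f(x) − f*) ≥ c·α/D². -/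
open scoped RealInnerProductSpace

/-- Convex line search progress: if `f` is convex with global minimizer `x*`,
`‖x - x*‖ ≤ D`, and a successful iteration achieves `f(x) - f(x') ≥ c α ‖∇f(x)‖²`
with `f* < f(x') < f(x)`, then the reciprocal optimality gap increases by at least
`c α / D²`. -/
theorem stmt_13 {E : Type*} [NormedAddCommGroup E] [InnerProductSpace ℝ E] [CompleteSpace E]
    (f : E → ℝ) (hconv : ConvexOn ℝ Set.univ f) (hf : Differentiable ℝ f)
    (xstar : E) (hmin : ∀ y, f xstar ≤ f y)
    (x x' : E) (D c α : ℝ) (hD : 0 < D) (hc : 0 < c) (hα : 0 < α)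
    (hdist : ‖x - xstar‖ ≤ D)
    (hgap : f xstar < f x') (hdec : f x' < f x)
    (hsuff : f x - f x' ≥ c * α * ‖gradient f x‖ ^ 2) :
    1 / (f x' - f xstar) - 1 / (f x - f xstar) ≥ c * α / D ^ 2 := by
  set g := gradient f x with hg
  -- Step 1: convexity gives f x - f xstar ≤ ⟪g, x - xstar⟫
  have hgrad : HasGradientAt f g x := (hf x).hasGradientAt
  have hfderiv : HasFDerivAt f ((InnerProductSpace.toDual ℝ E) g) x :=
    hgrad.hasFDerivAt
  set v := xstar - x with hv
  set φ : ℝ → E := fun t => x + t • v with hφ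
  have hφd : HasDerivAt φ v 0 := by
    have : HasDerivAt (fun t : ℝ => t • v) ((1 : ℝ) • v) 0 :=
      (hasDerivAt_id (0 : ℝ)).smul_const v
    simpa [hφ] using this.const_add x
  have hcomp : HasDerivAt (f ∘ φ) (inner ℝ g v) 0 := by
    have h0 : φ 0 = x := by simp [hφ]
    have hfd2 : HasFDerivAt f ((InnerProductSpace.toDual ℝ E) g) (φ 0) := by
      rw [h0]; exact hfderiv
    have := hfd2.comp_hasDerivAt 0 hφd
    simpa [InnerProductSpace.toDual_apply_apply] using this
  have hgconv : ConvexOn ℝ Set.univ (f ∘ φ) := by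
    have hφeq : ∀ t, φ t = (AffineMap.lineMap x xstar : ℝ →ᵃ[ℝ] E) t := by
      intro t
      simp [hφ, hv, AffineMap.lineMap_apply]
      abel
    have : (f ∘ φ) = f ∘ (AffineMap.lineMap x xstar : ℝ →ᵃ[ℝ] E) := by
      funext t; simp [Function.comp, hφeq t]
    rw [this]
    have := hconv.comp_affineMap (AffineMap.lineMap x xstar : ℝ →ᵃ[ℝ] E)
    simpa using this
  have hslope : inner ℝ g v ≤ (f ∘ φ) 1 - (f ∘ φ) 0 := by
    have := hgconv.le_slope_of_hasDerivAt (Set.mem_univ (0:ℝ)) (Set.mem_univ (1:ℝ))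
      (by norm_num) hcomp
    simpa [slope_def_field] using this
  have hkey : f x - f xstar ≤ ⟪g, x - xstar⟫ := by
    have h1 : (f ∘ φ) 1 = f xstar := by simp [hφ, hv]
    have h0 : (f ∘ φ) 0 = f x := by simp [hφ]
    have : ⟪g, v⟫ ≤ f xstar - f x := by rw [← h1, ← h0]; exact hslope
    have h2 : ⟪g, x - xstar⟫ = - ⟪g, v⟫ := by
      rw [hv]; rw [← inner_neg_right]; congr 1; abel
    linarith [h2 ▸ (neg_le_neg this)]
  -- Step 2: Cauchy–Schwarz
  have hCS : ⟪g, x - xstar⟫ ≤ ‖g‖ * D := by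
    calc ⟪g, x - xstar⟫ ≤ ‖g‖ * ‖x - xstar‖ := real_inner_le_norm g (x - xstar)
    _ ≤ ‖g‖ * D := by
        exact mul_le_mul_of_nonneg_left hdist (norm_nonneg g)
  have hbound : f x - f xstar ≤ ‖g‖ * D := le_trans hkey hCS
  -- Step 3: arithmetic
  set a := f x - f xstar with ha
  set b := f x' - f xstar with hb
  have hb0 : 0 < b := by simp [hb]; linarith
  have ha0 : 0 < a := by simp [ha]; linarith
  have hba : b < a := by simp [ha, hb]; linarith
  have hG : 0 < ‖g‖ := by
    by_contra h
    push_neg at h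
    have : ‖g‖ = 0 := le_antisymm h (norm_nonneg g)
    rw [this] at hbound
    simp at hbound
    linarith
  have hdelta : a - b ≥ c * α * ‖g‖ ^ 2 := by
    have : a - b = f x - f x' := by simp [ha, hb]
    linarith [this ▸ hsuff]
  have h1 : 1 / b - 1 / a = (a - b) / (a * b) := by
    field_simp
  rw [h1]
  rw [ge_iff_le, div_le_div_iff₀ (by positivity) (by positivity)]
  -- c * α * (a * b) ≤ (a - b) * D ^ 2
  have hab : a * b ≤ (‖g‖ * D) ^ 2 := by
    nlinarith [hbound, hb0, ha0, hba]
  nlinarith [hdelta, hab, mul_pos hc hα, sq_nonneg ‖g‖, hD, mul_pos (mul_pos hc hα) (mul_pos hD hD)]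
end

section
/- Let E be a real inner product space, f : E → ℝ with f(y) > f* for all y and some f* ∈ ℝ. Let γ > 1, ᾱ > 0, α̲ ∈ (0, ᾱ], α_0 ∈ (0, ᾱ], c₅ > 0, ε > 0, and ν ∈ (0,1) satisfy ν·c₅ ≥ (1 − ν)·((γ − 1)·ᾱ + (1 − γ⁻¹)·α̲). Let (x_k)_{k∈ℕ} in E and (α_k)_{k∈ℕ} in [α̲, ᾱ] be sequences such that for every k either (successful) 1/(f(x_{k+1}) − f*) − 1/(f(x_k) − f*) ≥ c₅ with f(x_{k+1}) ≤ f(x_k), and α_{k+1} ≤ γ·α_k, or (unsuccessful) x_{k+1} = x_k and α_{k+1} = γ⁻¹·α_k. Define T_ε := min{k ∈ ℕ : f(x_k) − f* ≤ ε}. Then T_ε ≤ (ν/ε + (1 − ν)·α_0) / ((1 − ν)·(1 − γ⁻¹)·α̲) + 1. -/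
/-- `O(ε⁻¹)` complexity for the line search instance of the adaptive deterministic
framework on convex `f`, with progress measure
`Φ_k = ν (1/ε - 1/(f(x_k) - f*)) + (1-ν) α_k` and stopping time
`T_ε = min {k : f(x_k) - f* ≤ ε}` captured by quantifying over all `T` such that
`ε < f(x_k) - f*` for every `k < T`. -/
theorem stmt_15 {E : Type*} [NormedAddCommGroup E] [InnerProductSpace ℝ E]
    (f : E → ℝ) (fstar : ℝ) (hfstar : ∀ y, fstar < f y)
    (γ αbar αlow c₅ ε ν : ℝ) (hγ : 1 < γ) (hαbar : 0 < αbar)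
    (hαlowpos : 0 < αlow) (hαlowle : αlow ≤ αbar) (hc₅ : 0 < c₅) (hε : 0 < ε)
    (hν : 0 < ν) (hν1 : ν < 1)
    (hνcond : ν * c₅ ≥ (1 - ν) * ((γ - 1) * αbar + (1 - γ⁻¹) * αlow))
    (x : ℕ → E) (α : ℕ → ℝ)
    (hα0pos : 0 < α 0) (hα0le : α 0 ≤ αbar)
    (hαrange : ∀ k, αlow ≤ α k ∧ α k ≤ αbar)
    (hcase : ∀ k : ℕ,
      (1 / (f (x (k + 1)) - fstar) - 1 / (f (x k) - fstar) ≥ c₅ ∧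
        f (x (k + 1)) ≤ f (x k) ∧ α (k + 1) ≤ γ * α k) ∨
      (x (k + 1) = x k ∧ α (k + 1) = γ⁻¹ * α k)) :
    ∀ T : ℕ, (∀ k < T, ε < f (x k) - fstar) →
      (T : ℝ) ≤ (ν / ε + (1 - ν) * α 0) / ((1 - ν) * (1 - γ⁻¹) * αlow) + 1 := by
  intro T hT
  have hγ0 : 0 < γ := lt_trans one_pos hγ
  have hγinv : γ⁻¹ < 1 := by
    rw [inv_lt_one_iff₀]; right; exact hγ
  have hγinv0 : 0 < γ⁻¹ := inv_pos.mpr hγ0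
  have h1ν : 0 < 1 - ν := by linarith
  obtain ⟨δ, hδdef⟩ : ∃ d : ℝ, d = (1 - ν) * (1 - γ⁻¹) * αlow := ⟨_, rfl⟩
  have hδ : 0 < δ := by rw [hδdef]; apply mul_pos (mul_pos h1ν (by linarith)) hαlowpos
  obtain ⟨Φ, hΦ⟩ : ∃ Φ : ℕ → ℝ,
      ∀ k, Φ k = ν * (1/ε - 1/(f (x k) - fstar)) + (1 - ν) * α k :=
    ⟨_, fun _ => rfl⟩
  -- per-step decrease
  have hstep : ∀ k, Φ (k + 1) ≤ Φ k - δ := by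
    intro k
    rw [hΦ, hΦ, hδdef]
    rcases hcase k with ⟨h1, _, h3⟩ | ⟨h1, h2⟩
    · have hαk := (hαrange k).2
      have hαk1 := (hαrange k).1
      have key : (1 - ν) * (α (k+1) - α k) ≤ (1 - ν) * ((γ - 1) * αbar) := by
        apply mul_le_mul_of_nonneg_left _ (le_of_lt h1ν)
        nlinarith
      nlinarith [mul_le_mul_of_nonneg_left h1 (le_of_lt hν)]
    · have hαk := (hαrange k).1
      rw [h1, h2]
      nlinarith
  -- Φ k ≤ Φ 0 - k * δ
  have hΦk : ∀ k, Φ k ≤ Φ 0 - k * δ := by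
    intro k
    induction k with
    | zero => simp
    | succ n ih =>
      have := hstep n
      push_cast
      linarith
  rcases Nat.eq_zero_or_pos T with rfl | hTpos
  · simp only [Nat.cast_zero]
    have hnum : 0 ≤ ν / ε + (1 - ν) * α 0 :=
      add_nonneg (by positivity) (le_of_lt (mul_pos h1ν hα0pos))
    have hden : 0 < (1 - ν) * (1 - γ⁻¹) * αlow := hδdef ▸ hδ
    have := div_nonneg hnum (le_of_lt hden)
    linarith
  · obtain ⟨S, rfl⟩ := Nat.exists_eq_add_of_le hTpos
    have hgap : ε < f (x S) - fstar := hT S (by omega)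
    have hΦS : 0 ≤ Φ S := by
      have h1 : 1/(f (x S) - fstar) ≤ 1/ε :=
        one_div_le_one_div_of_le hε (le_of_lt hgap)
      have h2 : αlow ≤ α S := (hαrange S).1
      rw [hΦ]
      nlinarith
    have hΦ0 : Φ 0 ≤ ν / ε + (1 - ν) * α 0 := by
      have hg0 : 0 < f (x 0) - fstar := by have := hfstar (x 0); linarith
      have h1 : 0 ≤ ν * (1/(f (x 0) - fstar)) := by positivity
      have h2 : ν * (1/ε) = ν / ε := by ring
      rw [hΦ]
      nlinarith
    have h3 := hΦk S
    have hSδ : (S : ℝ) * δ ≤ ν / ε + (1 - ν) * α 0 := by linarith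
    have h4 : (S : ℝ) ≤ (ν / ε + (1 - ν) * α 0) / δ :=
      (le_div_iff₀ hδ).mpr hSδ
    rw [← hδdef]
    push_cast
    linarith
end
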